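/- For a tuple a = (a_1,…,a_n) with 0 ≤ a_i ≤ n+1−i, let C_a be the full additive subcategory of representations of the linearly oriented quiver A_n generated by the interval representations E^{ij} with i ≤ j < i + a_i. Then C_a is closed under quotients: if X is a direct sum of such intervals and X surjects onto Y, then every interval summand of Y also satisfies this condition. -/

import Mathlib

open Classical

/-- A representation of a quiver (given by vertex type `ι`, arrow type `E`,
and source/target maps `s t : E → ι`) over a field `K`: a finite-dimensional
`K`-vector space at each vertex and a linear map along each arrow. -/
structure QRep (K : Type) [Field K] {ι : Type} {E : Type} (s t : E → ι) : Type 1 where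
  V : ι → Type
  [addV : ∀ i, AddCommGroup (V i)]
  [modV : ∀ i, Module K (V i)]
  [fdV : ∀ i, FiniteDimensional K (V i)]
  f : ∀ e : E, V (s e) →ₗ[K] V (t e)

attribute [instance] QRep.addV QRep.modV QRep.fdV

namespace QRep

variable {K : Type} [Field K] {ι E : Type} {s t : E → ι}

/-- A morphism of representations: linear maps at each vertex commuting with the arrow maps. -/
structure Hom (X Y : QRep K s t) : Type where
  φ : ∀ i, X.V i →ₗ[K] Y.V i
  comm : ∀ e, (Y.f e).comp (φ (s e)) = (φ (t e)).comp (X.f e)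

def Hom.Surjective {X Y : QRep K s t} (f : Hom X Y) : Prop := ∀ i, Function.Surjective (f.φ i)

def Hom.Injective {X Y : QRep K s t} (f : Hom X Y) : Prop := ∀ i, Function.Injective (f.φ i)

/-- Two representations are isomorphic if there is a morphism bijective at every vertex. -/
def Iso (X Y : QRep K s t) : Prop := ∃ f : Hom X Y, ∀ i, Function.Bijective (f.φ i)

/-- Direct sum of two representations, taken vertexwise. -/
def dsum (X Y : QRep K s t) : QRep K s t where
  V i := X.V i × Y.V i
  f e := (X.f e).prodMap (Y.f e)

instance : Module.Finite K PUnit :=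
  Module.Finite.of_surjective (0 : K →ₗ[K] PUnit) (fun x => ⟨0, Subsingleton.elim _ _⟩)

/-- The zero representation. -/
def zero : QRep K s t where
  V _ := PUnit
  f _ := 0

/-- A representation is zero if all its vector spaces are zero. -/
def IsZero (X : QRep K s t) : Prop := ∀ i, ∀ x : X.V i, x = 0

/-- Indecomposable: nonzero, and not isomorphic to a direct sum of two nonzero representations. -/
def Indec (X : QRep K s t) : Prop :=
  ¬ X.IsZero ∧ ∀ A B : QRep K s t, Iso X (A.dsum B) → A.IsZero ∨ B.IsZero

/-- Direct sum of a finite list of representations. -/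
noncomputable def dsumList : List (QRep K s t) → QRep K s t
  | [] => zero
  | X :: L => X.dsum (dsumList L)

/-- An extension `Y` of `Z` by `X`: an injective morphism `X → Y` and a surjective
morphism `Y → Z` whose vertexwise kernel is the image of `X`. -/
structure Extension (X Y Z : QRep K s t) : Type where
  incl : Hom X Y
  proj : Hom Y Z
  inj : ∀ i, Function.Injective (incl.φ i)
  surj : ∀ i, Function.Surjective (proj.φ i)
  exact : ∀ i, LinearMap.ker (proj.φ i) = LinearMap.range (incl.φ i)

/-- An extension is trivial (split) if there is a morphism `Y → X` restricting to the identity on `X`. -/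
def Extension.Trivial {X Y Z : QRep K s t} (E : Extension X Y Z) : Prop :=
  ∃ r : Hom Y X, ∀ i x, r.φ i (E.incl.φ i x) = x

/-- A subrepresentation of `Y`: a subspace at each vertex, stable under the arrow maps. -/
structure Sub (Y : QRep K s t) : Type where
  p : ∀ i, Submodule K (Y.V i)
  stable : ∀ e, ∀ x ∈ p (s e), Y.f e x ∈ p (t e)

def Sub.toRep {Y : QRep K s t} (S : Sub Y) : QRep K s t where
  V i := S.p i
  f e := (Y.f e).restrict (S.stable e)

/-- The quotient representation `Y/X`. -/
def Sub.quot {Y : QRep K s t} (S : Sub Y) : QRep K s t where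
  V i := Y.V i ⧸ S.p i
  f e := Submodule.mapQ (S.p (s e)) (S.p (t e)) (Y.f e) (fun x hx => S.stable e x hx)

/-- The inclusion morphism of a subrepresentation. -/
def Sub.incl {Y : QRep K s t} (S : Sub Y) : Hom S.toRep Y where
  φ i := (S.p i).subtype
  comm e := by ext x; rfl

/-- The quotient morphism onto the quotient representation. -/
def Sub.mkQ {Y : QRep K s t} (S : Sub Y) : Hom Y S.quot where
  φ i := (S.p i).mkQ
  comm e := by ext x; first | rfl | simp [Sub.quot, LinearMap.comp_apply, Submodule.mapQ_apply]

/-- The space of morphisms between two representations, as a subspace of the product of Hom spaces. -/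
def HomSpace (X Y : QRep K s t) : Submodule K (∀ i, X.V i →ₗ[K] Y.V i) where
  carrier := {φ | ∀ e, (Y.f e).comp (φ (s e)) = (φ (t e)).comp (X.f e)}
  add_mem' := by
    intro a b ha hb e
    simp only [Set.mem_setOf_eq] at ha hb
    simp [LinearMap.comp_add, LinearMap.add_comp, ha e, hb e]
  zero_mem' := by intro e; simp
  smul_mem' := by
    intro c a ha e
    simp only [Set.mem_setOf_eq] at ha
    simp [LinearMap.comp_smul, LinearMap.smul_comp, ha e]

end QRep
/-- The source of the `e`-th arrow of the linearly oriented quiver `Aₙ`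
(vertices `0,…,n-1`, arrows `e → e+1` for `0 ≤ e < n-1`; 0-based indexing). -/
def ASrc (n : ℕ) (e : Fin (n - 1)) : Fin n := ⟨e.val, by have := e.isLt; omega⟩

/-- The target of the `e`-th arrow of `Aₙ`. -/
def ATgt (n : ℕ) (e : Fin (n - 1)) : Fin n := ⟨e.val + 1, by have := e.isLt; omega⟩

/-- Representations of the linearly oriented quiver `Aₙ`. -/
abbrev ARep (K : Type) [Field K] (n : ℕ) := QRep K (ASrc n) (ATgt n)

/-- The canonical map from `M` to a submodule `T`: the identity if `T = ⊤`, zero otherwise. -/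
noncomputable def toSub {K M : Type} [Field K] [AddCommGroup M] [Module K M]
    (T : Submodule K M) : M →ₗ[K] T :=
  if h : T = ⊤ then LinearMap.codRestrict T LinearMap.id (fun x => by simp [h]) else 0

/-- The vertex spaces of the interval representation `E^{ij}`: `K` for `i ≤ p ≤ j`, zero otherwise. -/
def ESub (K : Type) [Field K] (n i j : ℕ) (p : Fin n) : Submodule K K :=
  if i ≤ p.val ∧ p.val ≤ j then ⊤ else ⊥

/-- The interval representation `E^{ij}` of `Aₙ` (0-based): one-dimensional spaces at
vertices `i,…,j`, identity maps between consecutive ones, zero elsewhere. -/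
noncomputable def Eij (K : Type) [Field K] (n i j : ℕ) : ARep K n where
  V p := ESub K n i j p
  f e := (toSub (ESub K n i j (ATgt n e))).comp (ESub K n i j (ASrc n e)).subtype

/-- Direct sum of interval representations indexed by a list of pairs. -/
noncomputable def intervalSum (K : Type) [Field K] (n : ℕ) (L : List (ℕ × ℕ)) : ARep K n :=
  QRep.dsumList (L.map fun pr => Eij K n pr.1 pr.2)

/-- Membership of the pair `(i,j)` in `F_a = {(i,j) : i ≤ j < i + a_i}` (0-based;
`pr.2 < n` ensures the interval lies in the vertex range). -/
def condF (n : ℕ) (a : ℕ → ℕ) (pr : ℕ × ℕ) : Prop :=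
  pr.1 ≤ pr.2 ∧ pr.2 < n ∧ pr.2 < pr.1 + a pr.1

/-- An object lies in the full additive subcategory determined by the interval
representations `E^{ij}` with `cond (i,j)`, i.e. it is isomorphic to a finite direct sum
of such intervals. -/
def InCat (K : Type) [Field K] (n : ℕ) (cond : ℕ × ℕ → Prop) (X : ARep K n) : Prop :=
  ∃ L : List (ℕ × ℕ), (∀ pr ∈ L, cond pr) ∧ QRep.Iso X (intervalSum K n L)

/-- The subcategory of intervals satisfying `cond` is closed under quotients. -/
def QuotClosedCat (K : Type) [Field K] (n : ℕ) (cond : ℕ × ℕ → Prop) : Prop :=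
  ∀ X Y : ARep K n, InCat K n cond X → (∃ f : QRep.Hom X Y, f.Surjective) → InCat K n cond Y

/-- The subcategory of intervals satisfying `cond` is closed under extensions. -/
def ExtClosedCat (K : Type) [Field K] (n : ℕ) (cond : ℕ × ℕ → Prop) : Prop :=
  ∀ X Y Z : ARep K n, InCat K n cond X → InCat K n cond Z →
    Nonempty (QRep.Extension X Y Z) → InCat K n cond Y

/-- `a` is a bracket vector (membership in `M` stated separately): whenever
`1 ≤ j ≤ a i` (and `i + j` is a vertex), `j + a_{i+j} ≤ a_i`. 0-based indices. -/
def IsBracketVecN (n : ℕ) (a : ℕ → ℕ) : Prop :=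
  ∀ i < n, ∀ j : ℕ, 1 ≤ j → j ≤ a i → i + j < n → j + a (i + j) ≤ a i


section Aux

variable {K : Type} [Field K] {ι E : Type} {s t : E → ι}

/-- Composition of homs. -/
def QRep.Hom.comp {X Y Z : QRep K s t} (g : QRep.Hom Y Z) (f : QRep.Hom X Y) :
    QRep.Hom X Z where
  φ i := (g.φ i).comp (f.φ i)
  comm e := by
    ext x
    have h1 := LinearMap.congr_fun (g.comm e) (f.φ (s e) x)
    have h2 := LinearMap.congr_fun (f.comm e) x
    simp only [LinearMap.comp_apply] at *
    rw [h1, h2]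

/-- Left inclusion into a direct sum. -/
def QRep.Hom.inl (X Y : QRep K s t) : QRep.Hom X (X.dsum Y) where
  φ i := LinearMap.inl K (X.V i) (Y.V i)
  comm e := by ext x <;> exact Prod.ext rfl (map_zero (Y.f e))

/-- Right inclusion into a direct sum. -/
def QRep.Hom.inr (X Y : QRep K s t) : QRep.Hom Y (X.dsum Y) where
  φ i := LinearMap.inr K (X.V i) (Y.V i)
  comm e := by ext x <;> exact Prod.ext (map_zero (X.f e)) rfl

/-- Left projection from a direct sum. -/
def QRep.Hom.pfst (X Y : QRep K s t) : QRep.Hom (X.dsum Y) X where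
  φ i := LinearMap.fst K (X.V i) (Y.V i)
  comm e := by ext x <;> rfl

/-- Right projection from a direct sum. -/
def QRep.Hom.psnd (X Y : QRep K s t) : QRep.Hom (X.dsum Y) Y where
  φ i := LinearMap.snd K (X.V i) (Y.V i)
  comm e := by ext x <;> rfl

lemma projMem : ∀ (L : List (QRep K s t)) (X : QRep K s t), X ∈ L →
    ∃ h : QRep.Hom (QRep.dsumList L) X, ∀ i, Function.Surjective (h.φ i)
  | [], X, hX => by simp at hX
  | Y :: L, X, hX => by
    rcases List.mem_cons.1 hX with rfl | hX
    · exact ⟨QRep.Hom.pfst X (QRep.dsumList L), fun i x => ⟨(x, 0), rfl⟩⟩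
    · obtain ⟨h, hh⟩ := projMem L X hX
      exact ⟨h.comp (QRep.Hom.psnd Y (QRep.dsumList L)),
        fun i x => by
          obtain ⟨y, hy⟩ := hh i x
          exact ⟨(0, y), hy⟩⟩

lemma extractMem : ∀ (L : List (QRep K s t)) (W : QRep K s t)
    (g : QRep.Hom (QRep.dsumList L) W) (i : ι), g.φ i ≠ 0 →
    ∃ X ∈ L, ∃ h : QRep.Hom X W, h.φ i ≠ 0
  | [], W, g, i, hg => by
    exfalso
    apply hg
    ext x
    have : x = 0 := Subsingleton.elim (α := PUnit) x 0
    rw [this]; simp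
  | Y :: L, W, g, i, hg => by
    by_cases h1 : (g.comp (QRep.Hom.inl Y (QRep.dsumList L))).φ i = 0
    · by_cases h2 : (g.comp (QRep.Hom.inr Y (QRep.dsumList L))).φ i = 0
      · exfalso
        apply hg
        ext ⟨x, y⟩
        have e1 := LinearMap.congr_fun h1 x
        have e2 := LinearMap.congr_fun h2 y
        have e1' : g.φ i (x, 0) = 0 := e1
        have e2' : g.φ i (0, y) = 0 := e2
        have hsplit : ((x, y) : (Y.dsum (QRep.dsumList L)).V i) = (x, 0) + (0, y) := by
          simp
        show g.φ i (x, y) = 0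
        rw [hsplit]
        exact (map_add (g.φ i) ((x, 0) : (QRep.dsumList (Y :: L)).V i) (0, y)).trans ((congrArg₂ (· + ·) e1' e2').trans (add_zero _))
      · obtain ⟨X, hX, h, hh⟩ := extractMem L W
          (g.comp (QRep.Hom.inr Y (QRep.dsumList L))) i h2
        exact ⟨X, List.mem_cons_of_mem _ hX, h, hh⟩
    · exact ⟨Y, List.mem_cons_self, g.comp (QRep.Hom.inl Y (QRep.dsumList L)), h1⟩

end Aux

section EijLemmas

variable {K : Type} [Field K] {n i j : ℕ}

lemma ESub_eq_top {p : Fin n} (h : i ≤ p.val ∧ p.val ≤ j) : ESub K n i j p = ⊤ :=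
  if_pos h

lemma ESub_eq_bot {p : Fin n} (h : ¬(i ≤ p.val ∧ p.val ≤ j)) : ESub K n i j p = ⊥ :=
  if_neg h

lemma eij_elem_zero {p : Fin n} (h : ¬(i ≤ p.val ∧ p.val ≤ j))
    (x : (Eij K n i j).V p) : x = 0 := by
  have hb : ESub K n i j p = ⊥ := ESub_eq_bot h
  apply Subtype.ext
  have hx : x.val ∈ (⊥ : Submodule K K) := by rw [← hb]; exact x.2
  exact (Submodule.mem_bot K).1 hx

lemma Eij_f_val (e : Fin (n - 1))
    (ht : i ≤ e.val + 1 ∧ e.val + 1 ≤ j) (x : (Eij K n i j).V (ASrc n e)) :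
    ((Eij K n i j).f e x).val = x.val := by
  show ((toSub (ESub K n i j (ATgt n e))).comp
      (ESub K n i j (ASrc n e)).subtype x).val = x.val
  have htop : ESub K n i j (ATgt n e) = ⊤ := ESub_eq_top ht
  rw [toSub, dif_pos htop]
  rfl

lemma Eij_f_inj (e : Fin (n - 1))
    (ht : i ≤ e.val + 1 ∧ e.val + 1 ≤ j) :
    Function.Injective ((Eij K n i j).f e) := by
  intro x y hxy
  apply Subtype.ext
  have hx := Eij_f_val (K := K) e ht x
  have hy := Eij_f_val (K := K) e ht y
  rw [← hx, ← hy, hxy]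

lemma Eij_f_surj (e : Fin (n - 1))
    (hs : i ≤ e.val ∧ e.val ≤ j) (ht : i ≤ e.val + 1 ∧ e.val + 1 ≤ j) :
    Function.Surjective ((Eij K n i j).f e) := by
  intro y
  refine ⟨⟨y.val, ?_⟩, ?_⟩
  · rw [ESub_eq_top (p := ASrc n e) hs]; trivial
  · apply Subtype.ext
    exact Eij_f_val (K := K) e ht _

lemma Eij_f_tgt_zero (e : Fin (n - 1))
    (ht : ¬(i ≤ e.val + 1 ∧ e.val + 1 ≤ j)) (x : (Eij K n i j).V (ASrc n e)) :
    (Eij K n i j).f e x = 0 := by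
  show (toSub (ESub K n i j (ATgt n e))).comp
      (ESub K n i j (ASrc n e)).subtype x = 0
  have hbot : ESub K n i j (ATgt n e) = ⊥ := ESub_eq_bot ht
  have hne : ESub K n i j (ATgt n e) ≠ ⊤ := by
    rw [hbot]; exact bot_ne_top
  rw [toSub, dif_neg hne]
  rfl

end EijLemmas

/-- Key structural lemma: a hom of interval representations nonzero at the left
endpoint `i` of the target interval forces equal left endpoints and containment of
the right endpoint. -/
lemma key_interval {K : Type} [Field K] {n k l i j : ℕ} (hkl : k ≤ l) (hln : l < n)
    (hij : i ≤ j) (hjn : j < n) (hin : i < n)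
    (h : QRep.Hom (Eij K n k l) (Eij K n i j))
    (hne : h.φ ⟨i, hin⟩ ≠ 0) : k = i ∧ j ≤ l := by
  -- Step A : i ∈ [k,l]
  have hmem : k ≤ i ∧ i ≤ l := by
    by_contra hc
    apply hne
    ext x
    have hx := eij_elem_zero (K := K) (n := n) (i := k) (j := l) (p := ⟨i, hin⟩) hc x
    rw [hx]; simp
  -- Step B : i ≤ k
  have hik : i ≤ k := by
    by_contra hki
    push_neg at hki
    obtain ⟨m, rfl⟩ : ∃ m, i = m + 1 := ⟨i - 1, by omega⟩
    have hmn : m < n - 1 := by omega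
    set e : Fin (n - 1) := ⟨m, hmn⟩ with he
    have hev : (e : ℕ) = m := rfl
    obtain ⟨x, hx⟩ : ∃ x, h.φ ⟨m + 1, hin⟩ x ≠ 0 := by
      by_contra hc
      push_neg at hc
      exact hne (LinearMap.ext hc)
    have hsurj : Function.Surjective ((Eij K n k l).f e) :=
      Eij_f_surj e ⟨by omega, by omega⟩ ⟨by omega, by omega⟩
    obtain ⟨x', hx'⟩ := hsurj x
    have hcomm := LinearMap.congr_fun (h.comm e) x'
    simp only [LinearMap.comp_apply] at hcomm
    have hsrc0 : h.φ (ASrc n e) x' = 0 :=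
      eij_elem_zero (i := m + 1) (j := j) (p := ASrc n e) (by show ¬(m + 1 ≤ m ∧ m ≤ j); omega) _
    rw [hsrc0, map_zero] at hcomm
    have : h.φ (ATgt n e) ((Eij K n k l).f e x') = h.φ ⟨m + 1, hin⟩ x :=
      congrArg (h.φ (ATgt n e)) hx'
    rw [this] at hcomm
    exact hx hcomm.symm
  -- Step C : j ≤ l
  have hjl : j ≤ l := by
    by_contra hlj
    push_neg at hlj
    -- chain of nonvanishing
    have chain : ∀ p, i ≤ p → ∀ hpl : p ≤ l, h.φ ⟨p, by omega⟩ ≠ 0 := by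
      intro p hp
      induction p, hp using Nat.le_induction with
      | base => intro hpl; exact hne
      | succ p hp ih =>
        intro hpl
        have hpl' : p ≤ l := by omega
        obtain ⟨x, hx⟩ : ∃ x : (Eij K n k l).V ⟨p, by omega⟩, h.φ ⟨p, by omega⟩ x ≠ 0 := by
          by_contra hc
          push_neg at hc
          exact ih hpl' (LinearMap.ext hc)
        have hpn : p < n - 1 := by omega
        set e : Fin (n - 1) := ⟨p, hpn⟩ with he
        have hev : (e : ℕ) = p := rfl
        have hinj : Function.Injective ((Eij K n i j).f e) :=
          Eij_f_inj e ⟨by omega, by omega⟩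
        have hcomm := LinearMap.congr_fun (h.comm e) x
        change (Eij K n i j).f e (h.φ (ASrc n e) x) = h.φ (ATgt n e) ((Eij K n k l).f e x) at hcomm
        intro hc
        apply hx
        have hrhs : h.φ (ATgt n e) ((Eij K n k l).f e x) = 0 := by
          exact LinearMap.congr_fun hc ((Eij K n k l).f e x)
        rw [hrhs] at hcomm
        have h0 : (Eij K n i j).f e (h.φ (ASrc n e) x) = (Eij K n i j).f e 0 := by
          rw [hcomm, map_zero]
        exact hinj h0
    have hl : h.φ ⟨l, by omega⟩ ≠ 0 := chain l hmem.2 le_rfl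
    obtain ⟨x, hx⟩ : ∃ x : (Eij K n k l).V ⟨l, by omega⟩, h.φ ⟨l, by omega⟩ x ≠ 0 := by
      by_contra hc
      push_neg at hc
      exact hl (LinearMap.ext hc)
    have hln1 : l < n - 1 := by omega
    set e : Fin (n - 1) := ⟨l, hln1⟩ with he
    have hev : (e : ℕ) = l := rfl
    have hinj : Function.Injective ((Eij K n i j).f e) :=
      Eij_f_inj e ⟨by omega, by omega⟩
    have hcomm := LinearMap.congr_fun (h.comm e) x
    change (Eij K n i j).f e (h.φ (ASrc n e) x) = h.φ (ATgt n e) ((Eij K n k l).f e x) at hcomm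
    have hz : (Eij K n k l).f e x = 0 :=
      Eij_f_tgt_zero e (by show ¬(k ≤ l + 1 ∧ l + 1 ≤ l); omega) x
    rw [hz, map_zero] at hcomm
    apply hx
    have h0 : (Eij K n i j).f e (h.φ (ASrc n e) x) = (Eij K n i j).f e 0 := by
      rw [hcomm, map_zero]
    exact hinj h0
  exact ⟨le_antisymm hmem.1 hik, hjl⟩

/-- for `a ∈ M` (i.e. `a i ≤ n - i`, 0-based), the subcategory `C_a` is closed
under quotients: if a direct sum of intervals of `F_a` surjects onto a direct sum of
intervals, every one of the latter intervals lies in `F_a`. -/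
theorem stmt9 (K : Type) [Field K] (n : ℕ) (a : ℕ → ℕ) (hM : ∀ i < n, a i ≤ n - i)
    (L : List (ℕ × ℕ)) (hL : ∀ pr ∈ L, condF n a pr)
    (L' : List (ℕ × ℕ)) (hL' : ∀ pr ∈ L', pr.1 ≤ pr.2 ∧ pr.2 < n)
    (f : QRep.Hom (intervalSum K n L) (intervalSum K n L')) (hf : f.Surjective) :
    ∀ pr ∈ L', condF n a pr := by
  intro pr hpr
  obtain ⟨hij, hjn⟩ := hL' pr hpr
  refine ⟨hij, hjn, ?_⟩
  have hin : pr.1 < n := lt_of_le_of_lt hij hjn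
  -- projection onto the summand `Eij pr.1 pr.2`
  have hmem : Eij K n pr.1 pr.2 ∈ L'.map (fun qr => Eij K n qr.1 qr.2) :=
    List.mem_map.2 ⟨pr, hpr, rfl⟩
  obtain ⟨proj, hproj⟩ := projMem _ _ hmem
  set g : QRep.Hom (intervalSum K n L) (Eij K n pr.1 pr.2) := proj.comp f with hg
  have hgsurj : Function.Surjective (g.φ ⟨pr.1, hin⟩) := by
    intro y
    obtain ⟨z, hz⟩ := hproj ⟨pr.1, hin⟩ y
    obtain ⟨w, hw⟩ := hf ⟨pr.1, hin⟩ z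
    refine ⟨w, ?_⟩
    show proj.φ ⟨pr.1, hin⟩ (f.φ ⟨pr.1, hin⟩ w) = y
    rw [hw, hz]
  have hgne : g.φ ⟨pr.1, hin⟩ ≠ 0 := by
    intro hc
    have hy : (⟨1, by rw [ESub_eq_top (p := (⟨pr.1, hin⟩ : Fin n)) ⟨le_rfl, hij⟩]; trivial⟩ :
        (Eij K n pr.1 pr.2).V ⟨pr.1, hin⟩) ≠ 0 := by
      intro h0
      have := congrArg Subtype.val h0
      simp at this
    obtain ⟨x, hx⟩ := hgsurj ⟨1, by rw [ESub_eq_top (p := (⟨pr.1, hin⟩ : Fin n)) ⟨le_rfl, hij⟩]; trivial⟩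
    rw [hc] at hx
    exact hy hx.symm
  obtain ⟨X, hX, h, hh⟩ := extractMem _ _ g ⟨pr.1, hin⟩ hgne
  obtain ⟨qr, hqrL, rfl⟩ := List.mem_map.1 hX
  obtain ⟨hq1, hq2, hq3⟩ := hL qr hqrL
  obtain ⟨hk, hl⟩ := key_interval hq1 hq2 hij hjn hin h hh
  rw [hk] at hq3
  omega
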